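/- Let (G_i)_{i ∈ ι} be a family of profinite groups and let G = ∏_{i ∈ ι} G_i with the product topology. Assume that for all i ≠ j in ι there is no finite nonabelian simple group that is a continuous quotient of both G_i and G_j. Let H be a closed subgroup of G such that (a) for every i ∈ ι the projection map H → G_i is surjective, and (b) the composition of the inclusion H → G with the quotient map G → G/cl([G,G]) is surjective, where cl([G,G]) denotes the topological closure of the commutator subgroup of G. Then H = G. -/

import Mathlib

open Function

open Function

open scoped commutatorElement

section Aux

/-- Image of an element of the commutator subgroup lies in the commutator subgroup. -/
theorem apply_mem_commutator' {G G' : Type*} [Group G] [Group G'] (f : G →* G') {x : G}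
    (hx : x ∈ commutator G) : f x ∈ commutator G' := by
  have h1 : f x ∈ Subgroup.map f (commutator G) := Subgroup.mem_map_of_mem f hx
  rw [commutator_def, Subgroup.map_commutator] at h1
  exact Subgroup.commutator_mono le_top le_top h1

/-- A nontrivial quotient of a perfect group is nonabelian. -/
theorem not_comm_of_perfect {C S : Type*} [Group C] [Group S] [Nontrivial S]
    (hperf : commutator C = ⊤) (φ : C →* S) (hφ : Surjective φ)
    (hcomm : ∀ a b : S, a * b = b * a) : False := by
  have h1 : commutator S = ⊤ := by
    have : Subgroup.map φ (commutator C) = ⊤ := by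
      rw [hperf]; exact Subgroup.map_top_of_surjective φ hφ
    rw [commutator_def, Subgroup.map_commutator,
      Subgroup.map_top_of_surjective φ hφ] at this
    rw [commutator_def, this]
  have h2 : commutator S ≤ ⊥ := by
    rw [commutator_eq_closure]
    refine (Subgroup.closure_le _).mpr ?_
    rintro x ⟨a, b, rfl⟩
    have : ⁅a, b⁆ = 1 := commutatorElement_eq_one_iff_commute.mpr (hcomm a b)
    simp [this]
  obtain ⟨a, b, hab⟩ := exists_pair_ne S
  have ha : a ∈ (⊥ : Subgroup S) := h2 (h1 ▸ Subgroup.mem_top a)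
  have hb : b ∈ (⊥ : Subgroup S) := h2 (h1 ▸ Subgroup.mem_top b)
  exact hab ((Subgroup.mem_bot.mp ha).trans (Subgroup.mem_bot.mp hb).symm)

/-- Every finite nontrivial group has a simple quotient. -/
theorem exists_simple_quotient' : ∀ (n : ℕ) (C : Type u) (_ : Group C) (_ : Finite C)
    (_ : Nontrivial C), Nat.card C ≤ n →
    ∃ (S : Type u) (_ : Group S), IsSimpleGroup S ∧ ∃ φ : C →* S, Surjective φ := by
  intro n
  induction n using Nat.strong_induction_on with
  | _ n IH =>
    intro C _ _ _ hcard
    by_cases hs : IsSimpleGroup C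
    · exact ⟨C, inferInstance, hs, MonoidHom.id C, surjective_id⟩
    · have hex : ∃ N : Subgroup C, N.Normal ∧ N ≠ ⊥ ∧ N ≠ ⊤ := by
        by_contra h'
        push_neg at h'
        exact hs ⟨fun N hN => by
          by_cases hb : N = ⊥
          · exact Or.inl hb
          · exact Or.inr (h' N hN hb)⟩
      obtain ⟨N, hN, hb, ht⟩ := hex
      haveI := hN
      haveI : Nontrivial (C ⧸ N) := by
        obtain ⟨x, hx⟩ : ∃ x : C, x ∉ N := by
          by_contra h'
          push_neg at h'
          exact ht ((Subgroup.eq_top_iff' N).mpr h')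
        exact ⟨QuotientGroup.mk x, 1, fun h => hx ((QuotientGroup.eq_one_iff x).mp h)⟩
      haveI : Nontrivial N := by
        rcases N.bot_or_nontrivial with h | h
        · exact absurd h hb
        · exact h
      have hcard2 : 2 ≤ Nat.card N := Finite.one_lt_card
      have heq : Nat.card C = Nat.card (C ⧸ N) * Nat.card N :=
        Subgroup.card_eq_card_quotient_mul_card_subgroup N
      have hpos : 0 < Nat.card (C ⧸ N) := Nat.card_pos
      have hlt : Nat.card (C ⧸ N) < n := by nlinarith [Finite.one_lt_card (α := C)]
      obtain ⟨S, iS, hS, φ, hφ⟩ := IH _ hlt (C ⧸ N) inferInstance inferInstance inferInstance le_rfl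
      exact ⟨S, iS, hS, φ.comp (QuotientGroup.mk' N),
        hφ.comp (QuotientGroup.mk'_surjective N)⟩

/-- A simple quotient of a finite product factors through one of the factors. -/
theorem simple_quotient_of_pi {J : Type*} [Finite J] [DecidableEq J] {Q : J → Type*} [∀ j, Group (Q j)]
    {S : Type*} [Group S] [IsSimpleGroup S]
    (φ : (∀ j, Q j) →* S) (hφ : Surjective φ) :
    ∃ j, Surjective fun x : Q j => φ (Pi.mulSingle j x) := by
  classical
  by_contra h
  push_neg at h
  have hbot : ∀ (j) (x : Q j), φ (Pi.mulSingle j x) = 1 := by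
    intro j
    have hnorm : ((φ.comp (MonoidHom.mulSingle Q j)).range).Normal := by
      constructor
      intro s hs g
      obtain ⟨y, rfl⟩ := hφ g
      obtain ⟨x, rfl⟩ := hs
      refine ⟨y j * x * (y j)⁻¹, ?_⟩
      have key : y * Pi.mulSingle j x * y⁻¹ = Pi.mulSingle j (y j * x * (y j)⁻¹) := by
        funext i
        rcases eq_or_ne i j with rfl | hij
        · simp
        · simp [Pi.mulSingle_eq_of_ne hij]
      simp only [MonoidHom.comp_apply, MonoidHom.mulSingle_apply]
      rw [← key]
      simp
    rcases hnorm.eq_bot_or_eq_top with hB | hT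
    · intro x
      have : φ (Pi.mulSingle j x) ∈ (φ.comp (MonoidHom.mulSingle Q j)).range := ⟨x, rfl⟩
      rw [hB] at this
      exact Subgroup.mem_bot.mp this
    · exact absurd (fun s => by
        have : s ∈ (φ.comp (MonoidHom.mulSingle Q j)).range := hT ▸ Subgroup.mem_top s
        obtain ⟨x, hx⟩ := this
        exact ⟨x, hx⟩) (h j)
  have hker : ∀ x : ∀ j, Q j, φ x = 1 := by
    intro x
    have : x ∈ φ.ker := Subgroup.pi_mem_of_mulSingle_mem x fun j => by
      show Pi.mulSingle j (x j) ∈ φ.ker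
      exact hbot j (x j)
    exact this
  obtain ⟨a, b, hab⟩ := exists_pair_ne S
  obtain ⟨x, rfl⟩ := hφ a
  obtain ⟨y, rfl⟩ := hφ b
  exact hab ((hker x).trans (hker y).symm)

end Aux
open Function

section PiAux

variable {ι : Type*} [DecidableEq ι] (Q : ι → Type*) [∀ i, Group (Q i)] (i₀ : ι)

/-- Restriction homomorphism. -/
def piRestrict : (∀ i, Q i) →* (∀ j : {j : ι // j ≠ i₀}, Q j.1) :=
  MonoidHom.mk' (fun x j => x j.1) (fun _ _ => rfl)

/-- Extension by 1 homomorphism. -/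
def piExtend : (∀ j : {j : ι // j ≠ i₀}, Q j.1) →* (∀ i, Q i) :=
  MonoidHom.mk' (fun b i => if h : i = i₀ then 1 else b ⟨i, h⟩)
    (fun a b => by
      funext i
      by_cases h : i = i₀ <;> simp [h])

variable {Q i₀}

@[simp] theorem piRestrict_apply (x : ∀ i, Q i) (j : {j : ι // j ≠ i₀}) :
    piRestrict Q i₀ x j = x j.1 := rfl

@[simp] theorem piExtend_apply_self (b : ∀ j : {j : ι // j ≠ i₀}, Q j.1) :
    piExtend Q i₀ b i₀ = 1 := dif_pos rfl

theorem piExtend_apply_ne (b : ∀ j : {j : ι // j ≠ i₀}, Q j.1) {i : ι} (h : i ≠ i₀) :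
    piExtend Q i₀ b i = b ⟨i, h⟩ := dif_neg h

@[simp] theorem piRestrict_piExtend (b : ∀ j : {j : ι // j ≠ i₀}, Q j.1) :
    piRestrict Q i₀ (piExtend Q i₀ b) = b := by
  funext j
  rw [piRestrict_apply, piExtend_apply_ne b j.2]

theorem piSplit (x : ∀ i, Q i) :
    x = Pi.mulSingle i₀ (x i₀) * piExtend Q i₀ (piRestrict Q i₀ x) := by
  funext i
  by_cases h : i = i₀
  · subst h; simp
  · simp [Pi.mulSingle_eq_of_ne h, piExtend_apply_ne _ h]

theorem piExtend_of_eq_one (x : ∀ i, Q i) (h : x i₀ = 1) :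
    x = piExtend Q i₀ (piRestrict Q i₀ x) := by
  conv_lhs => rw [piSplit (i₀ := i₀) x]
  rw [h]
  simp

end PiAux

/-- The key finite lemma. -/
theorem key_finite (n : ℕ) : ∀ (ι : Type u) (Q : ι → Type v) (_ : Fintype ι)
    (_ : ∀ i, Group (Q i)) (_ : ∀ i, Finite (Q i)),
    Nat.card (∀ i, Q i) ≤ n →
    (∀ i j : ι, i ≠ j → ¬ ∃ (S : Type) (_ : Group S),
        Finite S ∧ IsSimpleGroup S ∧ (¬ ∀ a b : S, a * b = b * a) ∧
        (∃ f : Q i →* S, Surjective f) ∧ (∃ g : Q j →* S, Surjective g)) →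
    ∀ K : Subgroup (∀ i, Q i),
    (∀ i, Surjective fun k : K => (k : ∀ i, Q i) i) →
    (∀ x : ∀ i, Q i, ∃ k ∈ K, x⁻¹ * k ∈ commutator (∀ i, Q i)) →
    K = ⊤ := by
  induction n using Nat.strong_induction_on with
  | _ n IH =>
    intro ι Q _ _ _ hcard hdisj K hproj hab
    classical
    by_cases hne : ∃ i₀ : ι, Nontrivial (Q i₀)
    · obtain ⟨i₀, hi₀⟩ := hne
      set ι' := {j : ι // j ≠ i₀} with hι'
      haveI : Fintype ι' := Fintype.ofFinite _
      -- Step 0 : the image of K in the rest is everything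
      have hKB : ∀ b : ∀ j : ι', Q j.1, ∃ k, k ∈ K ∧ (piRestrict Q i₀) k = b := by
        have cardlt : Nat.card (∀ j : ι', Q j.1) < n := by
          have hsplit : Nat.card (∀ i, Q i) = Nat.card (Q i₀) * Nat.card (∀ j : ι', Q j.1) := by
            rw [Nat.card_congr (Equiv.piSplitAt i₀ Q), Nat.card_prod]
          have h1 : 1 < Nat.card (Q i₀) := Finite.one_lt_card
          have h2 : 0 < Nat.card (∀ j : ι', Q j.1) := Nat.card_pos
          nlinarith
        have := IH _ cardlt ι' (fun j => Q j.1) inferInstance inferInstance inferInstance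
          le_rfl
          (fun i j hij => hdisj i.1 j.1 (fun h => hij (Subtype.ext h)))
          (K.map (piRestrict Q i₀))
          (fun j q => by
            obtain ⟨k, hk⟩ := hproj j.1 q
            exact ⟨⟨(piRestrict Q i₀) k, Subgroup.mem_map_of_mem (piRestrict Q i₀) k.2⟩, hk⟩)
          (fun b => by
            obtain ⟨k, hkK, hkc⟩ := hab ((piExtend Q i₀) b)
            refine ⟨(piRestrict Q i₀) k, Subgroup.mem_map_of_mem (piRestrict Q i₀) hkK, ?_⟩
            have h1 : (piRestrict Q i₀) (((piExtend Q i₀) b)⁻¹ * k) ∈ commutator (∀ j : ι', Q j.1) :=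
              apply_mem_commutator' (piRestrict Q i₀) hkc
            rwa [map_mul, map_inv, piRestrict_piExtend] at h1)
        intro b
        have hb : b ∈ K.map (piRestrict Q i₀) := this ▸ Subgroup.mem_top b
        obtain ⟨k, hkK, hk⟩ := hb
        exact ⟨k, hkK, hk⟩
      -- the subgroup N
      set N : Subgroup (∀ j : ι', Q j.1) := K.comap (piExtend Q i₀) with hN
      have hNnormal : N.Normal := by
        constructor
        intro b hb c
        obtain ⟨k, hkK, hk⟩ := hKB c
        have h1 : k * (piExtend Q i₀) b * k⁻¹ ∈ K := mul_mem (mul_mem hkK hb) (inv_mem hkK)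
        have h2 : k * (piExtend Q i₀) b * k⁻¹ = (piExtend Q i₀) (c * b * c⁻¹) := by
          funext i
          by_cases h : i = i₀
          · subst h
            simp
          · have hc : c ⟨i, h⟩ = k i := by rw [← hk]; rfl
            simp [Pi.mul_apply, Pi.inv_apply, piExtend_apply_ne _ h, hc]
        show (piExtend Q i₀) (c * b * c⁻¹) ∈ K
        rw [← h2]
        exact h1
      haveI := hNnormal
      -- perfectness input : every b lies in commutator ⊔ N
      have hBN : ∀ b : ∀ j : ι', Q j.1, b ∈ commutator (∀ j : ι', Q j.1) ⊔ N := by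
        have hW : commutator (Q i₀) ≤
            (K ⊓ Subgroup.comap (piRestrict Q i₀) (commutator (∀ j : ι', Q j.1) ⊔ N)).map
              (Pi.evalMonoidHom Q i₀) := by
          rw [commutator_eq_closure]
          refine (Subgroup.closure_le _).mpr ?_
          rintro a ⟨a₁, a₂, rfl⟩
          obtain ⟨k₁, hk₁⟩ := hproj i₀ a₁
          obtain ⟨k₂, hk₂⟩ := hproj i₀ a₂
          have hk₁' : (k₁ : ∀ i, Q i) i₀ = a₁ := hk₁
          have hk₂' : (k₂ : ∀ i, Q i) i₀ = a₂ := hk₂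
          refine Subgroup.mem_map.mpr
            ⟨⁅(k₁ : ∀ i, Q i), (k₂ : ∀ i, Q i)⁆, Subgroup.mem_inf.mpr ⟨?_, ?_⟩, ?_⟩
          · rw [commutatorElement_def]
            exact mul_mem (mul_mem (mul_mem k₁.2 k₂.2) (inv_mem k₁.2)) (inv_mem k₂.2)
          · rw [Subgroup.mem_comap, map_commutatorElement]
            exact le_sup_left (α := Subgroup _)
              (Subgroup.commutator_mem_commutator (Subgroup.mem_top _) (Subgroup.mem_top _))
          · show ⁅(k₁ : ∀ i, Q i), (k₂ : ∀ i, Q i)⁆ i₀ = ⁅a₁, a₂⁆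
            rw [← hk₁', ← hk₂']
            rfl
        intro b
        obtain ⟨k, hkK, hkc⟩ := hab ((piExtend Q i₀) b)
        have hkdef : k = (piExtend Q i₀) b * (((piExtend Q i₀) b)⁻¹ * k) := by group
        have hki₀ : k i₀ = (((piExtend Q i₀) b)⁻¹ * k) i₀ := by
          conv_lhs => rw [hkdef]
          simp
        have hc₀ : (((piExtend Q i₀) b)⁻¹ * k) i₀ ∈ commutator (Q i₀) :=
          apply_mem_commutator' (Pi.evalMonoidHom Q i₀) hkc
        obtain ⟨k₁, hk₁mem, hk₁i⟩ := Subgroup.mem_map.mp (hW (hki₀ ▸ hc₀))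
        obtain ⟨hk₁K, hk₁ρ⟩ := Subgroup.mem_inf.mp hk₁mem
        have h4 : (k * k₁⁻¹) i₀ = 1 := by
          show k i₀ * (k₁ i₀)⁻¹ = 1
          rw [show k₁ i₀ = k i₀ from hk₁i]
          simp
        have h5 : (piRestrict Q i₀) k * ((piRestrict Q i₀) k₁)⁻¹ ∈ N := by
          show (piExtend Q i₀) ((piRestrict Q i₀) k * ((piRestrict Q i₀) k₁)⁻¹) ∈ K
          have heq : (piRestrict Q i₀) k * ((piRestrict Q i₀) k₁)⁻¹ =
              (piRestrict Q i₀) (k * k₁⁻¹) := by rw [map_mul, map_inv]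
          rw [heq, ← piExtend_of_eq_one (k * k₁⁻¹) h4]
          exact mul_mem hkK (inv_mem hk₁K)
        have h6 : b = (piRestrict Q i₀) k * ((piRestrict Q i₀) (((piExtend Q i₀) b)⁻¹ * k))⁻¹ := by
          rw [map_mul, map_inv, piRestrict_piExtend]
          group
        have h7 : (piRestrict Q i₀) k ∈ commutator (∀ j : ι', Q j.1) ⊔ N := by
          have : (piRestrict Q i₀) k = ((piRestrict Q i₀) k * ((piRestrict Q i₀) k₁)⁻¹) * (piRestrict Q i₀) k₁ := by group
          rw [this]
          exact mul_mem (le_sup_right (α := Subgroup _) h5) hk₁ρ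
        rw [h6]
        exact mul_mem h7 (inv_mem (le_sup_left (α := Subgroup _)
          (apply_mem_commutator' (piRestrict Q i₀) hkc)))
      -- N must be everything
      have hNtop : ∀ b : ∀ j : ι', Q j.1, (piExtend Q i₀) b ∈ K := by
        by_cases hC : Nontrivial ((∀ j : ι', Q j.1) ⧸ N)
        · exfalso
          have hCperf : commutator ((∀ j : ι', Q j.1) ⧸ N) = ⊤ := by
            rw [eq_top_iff]
            have htop : (⊤ : Subgroup (∀ j : ι', Q j.1)) =
                commutator (∀ j : ι', Q j.1) ⊔ N :=
              le_antisymm (fun b _ => hBN b) le_top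
            rw [← Subgroup.map_top_of_surjective (QuotientGroup.mk' N)
              (QuotientGroup.mk'_surjective N), htop, Subgroup.map_sup]
            refine sup_le ?_ ?_
            · rw [commutator_def, Subgroup.map_commutator, commutator_def]
              exact Subgroup.commutator_mono le_top le_top
            · rintro x ⟨nn, hnn, rfl⟩
              have : (QuotientGroup.mk' N) nn = 1 := (QuotientGroup.eq_one_iff nn).mpr hnn
              rw [this]
              exact one_mem _
          obtain ⟨S', iS', hSsimp, φ, hφ⟩ := exists_simple_quotient'
            (Nat.card ((∀ j : ι', Q j.1) ⧸ N)) _ inferInstance inferInstance hC le_rfl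
          letI := iS'
          haveI := hSsimp
          have hSnab : ¬ ∀ a b : S', a * b = b * a := fun h =>
            not_comm_of_perfect hCperf φ hφ h
          -- S' is a quotient of one of the factors Q j, j ≠ i₀
          set ψB : (∀ j : ι', Q j.1) →* S' := φ.comp (QuotientGroup.mk' N) with hψB
          have hψBsurj : Surjective ψB := fun s => by
            obtain ⟨c, hc⟩ := hφ s
            obtain ⟨b, hb⟩ := QuotientGroup.mk'_surjective N c
            exact ⟨b, by rw [hψB, MonoidHom.comp_apply, hb, hc]⟩
          obtain ⟨j, hj⟩ := simple_quotient_of_pi ψB hψBsurj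
          -- S' is a quotient of Q i₀
          set ev : K →* Q i₀ := (Pi.evalMonoidHom Q i₀).comp K.subtype with hev
          have hevsurj : Surjective ev := hproj i₀
          set Φ : K →* S' := ψB.comp ((piRestrict Q i₀).comp K.subtype) with hΦ
          have hkerle : ev.ker ≤ Φ.ker := by
            intro k hk
            have hk1 : (k : ∀ i, Q i) i₀ = 1 := hk
            have : (k : ∀ i, Q i) = (piExtend Q i₀) ((piRestrict Q i₀) k) := piExtend_of_eq_one _ hk1
            have hρN : (piRestrict Q i₀) (k : ∀ i, Q i) ∈ N := by
              show (piExtend Q i₀) ((piRestrict Q i₀) (k : ∀ i, Q i)) ∈ K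
              rw [← this]
              exact k.2
            show ψB ((piRestrict Q i₀) (k : ∀ i, Q i)) = 1
            show φ (QuotientGroup.mk' N ((piRestrict Q i₀) (k : ∀ i, Q i))) = 1
            have hq1 : (QuotientGroup.mk' N) ((piRestrict Q i₀) (k : ∀ i, Q i)) = 1 :=
              (QuotientGroup.eq_one_iff _).mpr hρN
            rw [hq1]
            simp
          set f : Q i₀ →* S' :=
            ev.liftOfRightInverse (surjInv hevsurj) (rightInverse_surjInv hevsurj)
              ⟨Φ, hkerle⟩ with hf
          have hfev : ∀ k : K, f (ev k) = Φ k := fun k =>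
            ev.liftOfRightInverse_comp_apply _ _ ⟨Φ, hkerle⟩ k
          have hfsurj : Surjective f := by
            intro s
            obtain ⟨b, hb⟩ := hψBsurj s
            obtain ⟨k, hkK, hk⟩ := hKB b
            refine ⟨ev ⟨k, hkK⟩, ?_⟩
            rw [hfev ⟨k, hkK⟩]
            show ψB ((piRestrict Q i₀) k) = s
            rw [hk, hb]
          -- shrink S' to Type 0 and contradict hdisj
          haveI : Finite S' := Finite.of_surjective φ hφ
          haveI : Small.{0} S' := Countable.toSmall S'
          set E : Shrink.{0} S' ≃* S' := Shrink.mulEquiv with hE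
          haveI : Finite (Shrink.{0} S') := Finite.of_equiv S' E.toEquiv.symm
          haveI : Nontrivial (Shrink.{0} S') := E.toEquiv.nontrivial
          haveI : IsSimpleGroup (Shrink.{0} S') :=
            IsSimpleGroup.isSimpleGroup_of_surjective E.symm.toMonoidHom E.symm.surjective
          refine hdisj i₀ j.1 (Ne.symm j.2) ⟨Shrink.{0} S', inferInstance, inferInstance,
            inferInstance, ?_, ⟨E.symm.toMonoidHom.comp f, E.symm.surjective.comp hfsurj⟩,
            ⟨E.symm.toMonoidHom.comp (ψB.comp (MonoidHom.mulSingle (fun j : ι' => Q j.1) j)),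
              E.symm.surjective.comp hj⟩⟩
          intro h
          apply hSnab
          intro a b
          obtain ⟨x, rfl⟩ := E.surjective a
          obtain ⟨y, rfl⟩ := E.surjective b
          rw [← map_mul, ← map_mul, h x y]
        · -- quotient is trivial, so N = ⊤
          have hsub : Subsingleton ((∀ j : ι', Q j.1) ⧸ N) := not_nontrivial_iff_subsingleton.mp hC
          intro b
          show b ∈ N
          have : (QuotientGroup.mk b : (∀ j : ι', Q j.1) ⧸ N) = 1 := Subsingleton.elim _ _
          exact (QuotientGroup.eq_one_iff b).mp this
      -- conclude K = ⊤
      ext x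
      simp only [Subgroup.mem_top, iff_true]
      obtain ⟨k, hk⟩ := hproj i₀ (x i₀)
      have hk' : (k : ∀ i, Q i) i₀ = x i₀ := hk
      have h2 : Pi.mulSingle i₀ (x i₀) =
          (k : ∀ i, Q i) * ((piExtend Q i₀) ((piRestrict Q i₀) (k : ∀ i, Q i)))⁻¹ := by
        rw [eq_mul_inv_iff_mul_eq, ← hk']
        exact (piSplit (i₀ := i₀) (k : ∀ i, Q i)).symm
      have h3 : Pi.mulSingle i₀ (x i₀) ∈ K := by
        rw [h2]
        exact mul_mem k.2 (inv_mem (hNtop _))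
      rw [piSplit (i₀ := i₀) x]
      exact mul_mem h3 (hNtop _)
    · -- all factors trivial
      push_neg at hne
      haveI : ∀ i, Subsingleton (Q i) := fun i => hne i
      ext x
      simp only [Subgroup.mem_top, iff_true]
      have : x = 1 := Subsingleton.elim x 1
      rw [this]
      exact one_mem K



/-- Let `(G i)` be a family of profinite groups such that no two distinct factors share a
finite nonabelian simple continuous quotient.  If `H` is a closed subgroup of `G = ∏ i, G i`
which surjects onto every factor and onto `G / cl([G,G])`, then `H = G`. -/
theorem closed_subgroup_eq_top_of_surjections {ι : Type*} {G : ι → Type*}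
    [∀ i, Group (G i)] [∀ i, TopologicalSpace (G i)] [∀ i, IsTopologicalGroup (G i)]
    [∀ i, CompactSpace (G i)] [∀ i, T2Space (G i)] [∀ i, TotallyDisconnectedSpace (G i)]
    (hdisj : ∀ i j : ι, i ≠ j →
      ¬ ∃ (S : Type) (instS : Group S),
        letI := instS
        letI : TopologicalSpace S := ⊥
        Finite S ∧ IsSimpleGroup S ∧ (¬ ∀ a b : S, a * b = b * a) ∧
          (∃ f : G i →* S, Continuous f ∧ Function.Surjective f) ∧
          (∃ g : G j →* S, Continuous g ∧ Function.Surjective g))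
    (H : Subgroup (∀ i, G i)) (hHc : IsClosed (H : Set (∀ i, G i)))
    (hproj : ∀ i : ι, Function.Surjective (fun h : H => (h : ∀ j, G j) i))
    (hquot : Function.Surjective (fun h : H =>
      (QuotientGroup.mk (h : ∀ i, G i) :
        (∀ i, G i) ⧸ (commutator (∀ i, G i)).topologicalClosure))) :
    H = ⊤ := by
  classical
  have hdense : Dense (H : Set (∀ i, G i)) := by
    rw [dense_iff_inter_open]
    rintro U hU ⟨g, hg⟩
    obtain ⟨I, u, hu, hsub⟩ := isOpen_pi_iff.mp hU g hg
    have hNex : ∀ i : ι, ∃ N : Subgroup (G i), IsOpen (N : Set (G i)) ∧ N.Normal ∧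
        (∀ hi : i ∈ I, ∀ n ∈ N, g i * n ∈ u i) := by
      intro i
      by_cases hi : i ∈ I
      · obtain ⟨hio, hiu⟩ := hu i hi
        have hVopen : IsOpen ((fun n => g i * n) ⁻¹' (u i)) :=
          hio.preimage (continuous_mul_left (g i))
        have h1V : (1 : G i) ∈ (fun n => g i * n) ⁻¹' (u i) := by
          simp only [Set.mem_preimage, mul_one]
          exact hiu
        obtain ⟨W, hWclopen, h1W, hWV⟩ := compact_exists_isClopen_in_isOpen hVopen h1V
        obtain ⟨O, hO⟩ :=
          IsTopologicalGroup.exist_openNormalSubgroup_sub_clopen_nhds_of_one hWclopen h1W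
        exact ⟨O.toSubgroup, O.toOpenSubgroup.isOpen, O.isNormal',
          fun _ n hn => hWV (hO hn)⟩
      · exact ⟨⊤, by simp, inferInstance, fun h => absurd h hi⟩
    choose N hNopen hNnorm hNmem using hNex
    haveI : ∀ i, (N i).Normal := hNnorm
    haveI hQfin : ∀ i, Finite (G i ⧸ N i) := fun i =>
      Subgroup.quotient_finite_of_isOpen (N i) (hNopen i)
    haveI hQdisc : ∀ i, DiscreteTopology (G i ⧸ N i) := fun i =>
      QuotientGroup.discreteTopology (hNopen i)
    let Q : {i : ι // i ∈ I} → Type _ := fun i => G i.1 ⧸ N i.1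
    let π : (∀ i, G i) →* (∀ i : {i : ι // i ∈ I}, Q i) :=
      MonoidHom.mk' (fun x i => QuotientGroup.mk (x i.1)) (fun a b => rfl)
    have hπcont : Continuous π :=
      continuous_pi fun i => (continuous_quot_mk).comp (continuous_apply i.1)
    have hK : (H.map π) = ⊤ := by
      refine key_finite (Nat.card (∀ i : {i : ι // i ∈ I}, Q i)) _ Q inferInstance
        inferInstance inferInstance le_rfl ?_ (H.map π) ?_ ?_
      · -- disjointness
        rintro i j hij ⟨S, instS, hSfin, hSsimp, hSnab, ⟨f, hf⟩, ⟨g', hg'⟩⟩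
        refine hdisj i.1 j.1 (fun h => hij (Subtype.ext h)) ?_
        refine ⟨S, instS, hSfin, hSsimp, hSnab,
          ⟨f.comp (QuotientGroup.mk' (N i.1)), ?_, hf.comp (QuotientGroup.mk'_surjective _)⟩,
          ⟨g'.comp (QuotientGroup.mk' (N j.1)), ?_, hg'.comp (QuotientGroup.mk'_surjective _)⟩⟩
        · letI : TopologicalSpace S := ⊥
          haveI : DiscreteTopology S := discreteTopology_bot S
          show Continuous (⇑f ∘ ⇑(QuotientGroup.mk' (N i.1)))
          exact (continuous_of_discreteTopology (α := G i.1 ⧸ N i.1)).comp continuous_quot_mk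
        · letI : TopologicalSpace S := ⊥
          haveI : DiscreteTopology S := discreteTopology_bot S
          show Continuous (⇑g' ∘ ⇑(QuotientGroup.mk' (N j.1)))
          exact (continuous_of_discreteTopology (α := G j.1 ⧸ N j.1)).comp continuous_quot_mk
      · -- projections surjective
        intro i q
        obtain ⟨a, rfl⟩ := QuotientGroup.mk_surjective q
        obtain ⟨h, hh⟩ := hproj i.1 a
        have hh' : (h : ∀ j, G j) i.1 = a := hh
        exact ⟨⟨π h, Subgroup.mem_map_of_mem π h.2⟩, by
          show QuotientGroup.mk ((h : ∀ j, G j) i.1) = QuotientGroup.mk a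
          rw [hh']⟩
      · -- abelianization surjectivity
        intro q
        have hx : ∀ i : ι, ∃ a : G i, ∀ h : i ∈ I, (QuotientGroup.mk a : G i ⧸ N i) = q ⟨i, h⟩ := by
          intro i
          by_cases hi : i ∈ I
          · obtain ⟨a, ha⟩ := QuotientGroup.mk_surjective (q ⟨i, hi⟩)
            exact ⟨a, fun h => ha⟩
          · exact ⟨1, fun h => absurd h hi⟩
        choose x hxq using hx
        have hπx : π x = q := funext fun i => hxq i.1 i.2
        obtain ⟨⟨h, hhH⟩, hh⟩ := hquot (QuotientGroup.mk x)
        have hc : h⁻¹ * x ∈ (commutator (∀ i, G i)).topologicalClosure :=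
          QuotientGroup.eq.mp hh
        have hmem : π (h⁻¹ * x) ∈ commutator (∀ i : {i : ι // i ∈ I}, Q i) := by
          have h1 : π '' closure ((commutator (∀ i, G i) : Subgroup _) : Set (∀ i, G i)) ⊆
              closure (π '' ((commutator (∀ i, G i) : Subgroup _) : Set (∀ i, G i))) :=
            image_closure_subset_closure_image hπcont
          have h2 : π '' ((commutator (∀ i, G i) : Subgroup _) : Set (∀ i, G i)) ⊆
              ((commutator (∀ i : {i : ι // i ∈ I}, Q i) : Subgroup _) : Set _) := by
            rintro _ ⟨y, hy, rfl⟩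
            exact apply_mem_commutator' π hy
          have h3 := closure_minimal h2 (isClosed_discrete _)
          exact h3 (h1 ⟨h⁻¹ * x, hc, rfl⟩)
        refine ⟨π h, Subgroup.mem_map_of_mem π hhH, ?_⟩
        have : q⁻¹ * π h = (π (h⁻¹ * x))⁻¹ := by
          simp only [← hπx, map_mul, map_inv, mul_inv_rev, inv_inv]
          exact congrArg _ (inv_inv (π h)).symm
        rw [this]
        exact inv_mem hmem
    have hπg : π g ∈ H.map π := hK ▸ Subgroup.mem_top (π g)
    obtain ⟨h, hhH, hπ⟩ := hπg
    refine ⟨h, ?_, hhH⟩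
    refine hsub ?_
    intro i hi
    have h1 : (QuotientGroup.mk (h i) : G i ⧸ N i) = QuotientGroup.mk (g i) :=
      congrFun hπ ⟨i, hi⟩
    have h2 : (g i)⁻¹ * h i ∈ N i := QuotientGroup.eq.mp h1.symm
    have h3 := hNmem i hi _ h2
    simpa [mul_inv_cancel_left] using h3
  have hcl : (H : Set (∀ i, G i)) = Set.univ := by
    rw [← hHc.closure_eq]
    exact hdense.closure_eq
  ext x
  simp only [Subgroup.mem_top, iff_true]
  show x ∈ (H : Set (∀ i, G i))
  rw [hcl]
  trivial
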